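/- Let $\{A, U\}$ be an $\bold{L}$-bigraded dual pair of Hopf algebras over $\Bbb{K}$ with Hopf pairing $\langle\,\mid\,\rangle$, where $U$ is graded by an abelian group $\bold{Q}$ with a homomorphism $\gamma \mapsto \breve{\gamma}$ from $\bold{Q}$ to $\bold{L}$, and $\langle A_{\lambda,\mu} \mid U_{\gamma,\delta}\rangle \neq 0$ only if $\lambda + \mu = \breve{\gamma} + \breve{\delta}$. Let $p$ be an antisymmetric bicharacter on $\bold{L}$. Then the bilinear form $\langle a \mid u\rangle_p = p(\lambda,\breve{\gamma})^{-1} p(\mu,\breve{\delta})^{-1}\langle a \mid u\rangle$ for homogeneous $a \in A_{\lambda,\mu}$, $u \in U_{\gamma,\delta}$ satisfies the multiplicativity axiom: $\langle a \mid u_1 u_2\rangle_p = \sum \langle a_{(1)} \mid u_1\rangle_p \langle a_{(2)} \mid u_2\rangle_p$, where products on the left are taken in $U_{\breve{p}}$ (the twist of $U$) and the coproduct of $A$ is unchanged. -/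

import Mathlib

open TensorProduct

/-- The multiplication induced on `A ⊗ A` by a bilinear multiplication on `A`:
`(a ⊗ b)(c ⊗ d) = (ac) ⊗ (bd)`. -/
noncomputable def tsqMul {K A : Type*} [Field K] [AddCommGroup A] [Module K A]
    (mul : A →ₗ[K] A →ₗ[K] A) :
    (A ⊗[K] A) ⊗[K] (A ⊗[K] A) →ₗ[K] A ⊗[K] A :=
  (TensorProduct.map (TensorProduct.lift mul) (TensorProduct.lift mul)).comp
    (TensorProduct.tensorTensorTensorComm K A A A A).toLinearMap

/-- An `L`-bigraded Hopf algebra over `K`, given by explicit structure maps: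
a multiplication, unit, counit, comultiplication, antipode, and an internal
`L × L`-grading satisfying the compatibilities (1)-(4) of the paper. -/
structure LBigradedHopf (K L A : Type*) [Field K] [AddCommGroup L]
    [DecidableEq L] [AddCommGroup A] [Module K A] where
  mul : A →ₗ[K] A →ₗ[K] A
  one : A
  counit : A →ₗ[K] K
  comul : A →ₗ[K] A ⊗[K] A
  antipode : A →ₗ[K] A
  grade : L × L → Submodule K A
  mul_assoc' : ∀ a b c, mul (mul a b) c = mul a (mul b c)
  one_mul' : ∀ a, mul one a = a
  mul_one' : ∀ a, mul a one = a
  internal : DirectSum.IsInternal grade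
  one_mem : one ∈ grade 0
  mul_mem : ∀ i j : L × L, ∀ a ∈ grade i, ∀ b ∈ grade j, mul a b ∈ grade (i + j)
  coassoc : ∀ a, TensorProduct.map LinearMap.id comul (comul a) =
    (TensorProduct.assoc K A A A) (TensorProduct.map comul LinearMap.id (comul a))
  counit_left : ∀ a,
    (TensorProduct.lid K A) (TensorProduct.map counit LinearMap.id (comul a)) = a
  counit_right : ∀ a,
    (TensorProduct.rid K A) (TensorProduct.map LinearMap.id counit (comul a)) = a
  counit_one : counit one = 1
  counit_mul : ∀ a b, counit (mul a b) = counit a * counit b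
  comul_one : comul one = one ⊗ₜ[K] one
  comul_mul : ∀ a b, comul (mul a b) = tsqMul mul (comul a ⊗ₜ[K] comul b)
  antipode_left : ∀ a,
    TensorProduct.lift mul (TensorProduct.map antipode LinearMap.id (comul a)) =
      counit a • one
  antipode_right : ∀ a,
    TensorProduct.lift mul (TensorProduct.map LinearMap.id antipode (comul a)) =
      counit a • one
  comul_grade : ∀ i : L × L, ∀ a ∈ grade i, comul a ∈
    ⨆ ν : L, LinearMap.range
      (TensorProduct.map (grade (i.1, ν)).subtype (grade (-ν, i.2)).subtype)
  counit_grade : ∀ i : L × L, i.1 ≠ -i.2 → ∀ a ∈ grade i, counit a = 0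
  antipode_grade : ∀ i : L × L, ∀ a ∈ grade i, antipode a ∈ grade (i.2, i.1)


/- STATEMENT 9: For an `L`-bigraded dual pair `{A, U}` (with `U` graded by `Q`
and `γ ↦ γ̆ : Q → L` a homomorphism, the pairing vanishing unless
`λ + μ = γ̆ + δ̆`) and an antisymmetric bicharacter `p` on `L`, the deformed
pairing `⟨a|u⟩_p = p(λ,γ̆)⁻¹ p(μ,δ̆)⁻¹ ⟨a|u⟩` satisfies the multiplicativity
axiom `⟨a | u₁ u₂⟩_p = Σ ⟨a₍₁₎|u₁⟩_p ⟨a₍₂₎|u₂⟩_p`, where the product `u₁ u₂`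
is taken in the twist `U_p̆` and the coproduct of `A` is unchanged. -/
theorem stmt_9 {K L Q A U : Type*} [Field K] [AddCommGroup L] [DecidableEq L]
    [AddCommGroup Q] [DecidableEq Q]
    [AddCommGroup A] [Module K A] [AddCommGroup U] [Module K U]
    (BA : LBigradedHopf K L A) (BU : LBigradedHopf K Q U)
    (br : Q →+ L)
    (pair : A →ₗ[K] U →ₗ[K] K)
    (hcompat : ∀ (i : L × L) (j : Q × Q), ∀ a ∈ BA.grade i, ∀ u ∈ BU.grade j,
      pair a u ≠ 0 → i.1 + i.2 = br j.1 + br j.2)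
    (hpair_one : ∀ a, pair a BU.one = BA.counit a)
    (hpair_mul : ∀ (a : A) (u1 u2 : U), pair a (BU.mul u1 u2) =
      LinearMap.mul' K K
        (TensorProduct.map (pair.flip u1) (pair.flip u2) (BA.comul a)))
    (p : L → L → Kˣ)
    (hp1 : ∀ a b c, p (a + b) c = p a c * p b c)
    (hp2 : ∀ a b c, p a (b + c) = p a b * p a c)
    (hp3 : ∀ a, p a a = 1)
    (hp4 : ∀ a b, p a b = p b (-a))
    (mulU' : U →ₗ[K] U →ₗ[K] U)
    (hmulU' : ∀ j j' : Q × Q, ∀ u ∈ BU.grade j, ∀ u' ∈ BU.grade j',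
      mulU' u u' =
        ((p (br j.1) (br j'.1) * (p (br j.2) (br j'.2))⁻¹ : Kˣ) : K) •
          BU.mul u u')
    (pairp : A →ₗ[K] U →ₗ[K] K)
    (hpairp : ∀ (i : L × L) (j : Q × Q), ∀ a ∈ BA.grade i, ∀ u ∈ BU.grade j,
      pairp a u = (((p i.1 (br j.1))⁻¹ * (p i.2 (br j.2))⁻¹ : Kˣ) : K) *
        pair a u) :
    ∀ (a : A) (u1 u2 : U), pairp a (mulU' u1 u2) =
      LinearMap.mul' K K
        (TensorProduct.map (pairp.flip u1) (pairp.flip u2) (BA.comul a)) := by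

  classical
  -- basic bicharacter consequences
  have hp0 : ∀ a : L, p a 0 = 1 := by
    intro a
    have h := hp2 a 0 0
    simp only [add_zero] at h
    exact (left_eq_mul.mp h)
  have hswap : ∀ a b : L, p b a = (p a b)⁻¹ := by
    intro a b
    have h := hp2 b (-a) a
    simp only [neg_add_cancel, hp0] at h
    rw [← hp4 a b] at h
    exact eq_inv_of_mul_eq_one_right h.symm
  have hnegl : ∀ a b : L, p (-a) b = (p a b)⁻¹ := by
    intro a b
    have h := hp1 (-a) a b
    simp only [neg_add_cancel] at h
    have h0 : ∀ b : L, p 0 b = 1 := by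
      intro b
      have h' := hp1 0 0 b
      simp only [add_zero] at h'
      exact (left_eq_mul.mp h')
    rw [h0] at h
    exact eq_inv_of_mul_eq_one_left h.symm
  -- the key coefficient identity
  have hcoef : ∀ γ δ γ' δ' ν : L,
      (p γ γ' * (p δ δ')⁻¹) *
        ((p (γ + δ - ν) (γ + γ'))⁻¹ * (p (ν + (γ' + δ')) (δ + δ'))⁻¹) =
      ((p (γ + δ - ν) γ)⁻¹ * (p ν δ)⁻¹) *
        ((p (-ν) γ')⁻¹ * (p (ν + (γ' + δ')) δ')⁻¹) := by
    intro γ δ γ' δ' ν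
    rw [sub_eq_add_neg]
    rw [hp2 (γ + δ + -ν) γ γ']
    simp only [hp1, hp2, hnegl, hp3]
    rw [hswap δ δ', hswap δ γ']
    rw [Units.ext_iff]
    simp only [Units.val_mul, Units.val_inv_eq_inv_val, Units.val_one]
    field_simp
  have htopA : (⨆ i, BA.grade i) = ⊤ := BA.internal.submodule_iSup_eq_top
  have htopU : (⨆ j, BU.grade j) = ⊤ := BU.internal.submodule_iSup_eq_top
  have memA : ∀ x : A, x ∈ ⨆ i, BA.grade i := fun x => htopA ▸ Submodule.mem_top
  have memU : ∀ x : U, x ∈ ⨆ j, BU.grade j := fun x => htopU ▸ Submodule.mem_top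
  -- homogeneous case
  suffices H : ∀ (j1 : Q × Q) (u1 : U), u1 ∈ BU.grade j1 →
      ∀ (j2 : Q × Q) (u2 : U), u2 ∈ BU.grade j2 →
      ∀ (i : L × L) (a : A), a ∈ BA.grade i →
      pairp a (mulU' u1 u2) =
        LinearMap.mul' K K
          (TensorProduct.map (pairp.flip u1) (pairp.flip u2) (BA.comul a)) by
    intro a u1 u2
    refine Submodule.iSup_induction (x := u1) _
      (motive := fun v1 => ∀ v2 b, pairp b (mulU' v1 v2) =
        LinearMap.mul' K K
          (TensorProduct.map (pairp.flip v1) (pairp.flip v2) (BA.comul b)))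
      (memU u1) (fun j1 v1 hv1 => ?_) ?_ ?_ u2 a
    · -- v1 homogeneous; induct on v2
      intro v2 b
      refine Submodule.iSup_induction (x := v2) _
        (motive := fun v2 => ∀ b, pairp b (mulU' v1 v2) =
          LinearMap.mul' K K
            (TensorProduct.map (pairp.flip v1) (pairp.flip v2) (BA.comul b)))
        (memU v2) (fun j2 w2 hw2 => ?_) ?_ ?_ b
      · -- v2 homogeneous; induct on b
        intro c
        refine Submodule.iSup_induction (x := c) _
          (motive := fun c => pairp c (mulU' v1 w2) =
            LinearMap.mul' K K
              (TensorProduct.map (pairp.flip v1) (pairp.flip w2) (BA.comul c)))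
          (memA c) (fun i a ha => H j1 v1 hv1 j2 w2 hw2 i a ha) ?_ ?_
        · simp
        · intro x y hx hy
          simp only [map_add, LinearMap.add_apply] at *
          rw [hx, hy]
      · intro c; simp
      · intro x y hx hy c
        simp only [map_add, LinearMap.add_apply, TensorProduct.map_add_right,
          hx c, hy c]
    · intro v2 b; simp
    · intro x y hx hy v2 b
      simp only [map_add, LinearMap.add_apply, TensorProduct.map_add_left,
        hx v2 b, hy v2 b]
  -- now the homogeneous case
  rintro ⟨g1, d1⟩ u1 hu1 ⟨g2, d2⟩ u2 hu2 i a ha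
  have hm : BU.mul u1 u2 ∈ BU.grade ((g1, d1) + (g2, d2)) :=
    BU.mul_mem _ _ _ hu1 _ hu2
  rw [hmulU' (g1, d1) (g2, d2) u1 hu1 u2 hu2, map_smul,
    hpairp i ((g1, d1) + (g2, d2)) a ha _ hm, hpair_mul, smul_eq_mul]
  -- reduce to a statement about elements of the graded coproduct
  have key : ∀ t ∈ (⨆ ν : L, LinearMap.range
      (TensorProduct.map (BA.grade (i.1, ν)).subtype
        (BA.grade (-ν, i.2)).subtype)),
      ((p (br g1) (br g2) * (p (br d1) (br d2))⁻¹ : Kˣ) : K) *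
        ((((p i.1 (br ((g1, d1) + (g2, d2)).1))⁻¹ *
            (p i.2 (br ((g1, d1) + (g2, d2)).2))⁻¹ : Kˣ) : K) *
          LinearMap.mul' K K
            (TensorProduct.map (pair.flip u1) (pair.flip u2) t)) =
      LinearMap.mul' K K
        (TensorProduct.map (pairp.flip u1) (pairp.flip u2) t) := by
    intro t ht
    refine Submodule.iSup_induction (x := t) _ ht (fun ν t ht => ?_) (by simp) ?_
    · obtain ⟨s, rfl⟩ := ht
      induction s using TensorProduct.induction_on with
      | zero => simp
      | add x y hx hy =>
        simp only [map_add, mul_add] at *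
        rw [hx, hy]
      | tmul x y =>
        simp only [TensorProduct.map_tmul, Submodule.coe_subtype,
          LinearMap.mul'_apply, LinearMap.flip_apply]
        rw [hpairp (i.1, ν) (g1, d1) x.1 x.2 u1 hu1,
          hpairp (-ν, i.2) (g2, d2) y.1 y.2 u2 hu2]
        by_cases h1 : pair x.1 u1 = 0
        · rw [h1]; ring
        by_cases h2 : pair y.1 u2 = 0
        · rw [h2]; ring
        have e1 := hcompat (i.1, ν) (g1, d1) x.1 x.2 u1 hu1 h1
        have e2 := hcompat (-ν, i.2) (g2, d2) y.1 y.2 u2 hu2 h2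
        simp only at e1 e2
        have hi1 : i.1 = br g1 + br d1 - ν := by
          rw [← e1]; abel
        have hi2 : i.2 = ν + (br g2 + br d2) := by
          rw [← e2]; abel
        have hc := hcoef (br g1) (br d1) (br g2) (br d2) ν
        have hc' := congrArg (Units.val) hc
        simp only [Units.val_mul, Units.val_inv_eq_inv_val] at hc' ⊢
        rw [← hi1, ← hi2] at hc'
        simp only [Prod.fst_add, Prod.snd_add, map_add]
        linear_combination (pair x.1 u1 * pair y.1 u2) * hc'
    · intro x y hx hy
      simp only [map_add, mul_add] at *
      rw [hx, hy]
  exact key (BA.comul a) (BA.comul_grade i a ha)
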